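/- Let p be a prime and let H_p = {(a,b,0) ∈ G_p : a, b ∈ ℤ} be the subgroup of G_p generated by (1,0,0) and (0,1,0). Define τ : G_p → ℂ by τ(g) = 1 if g ∈ H_p and τ(g) = 0 otherwise. Then τ is not a pointwise limit of finite-dimensional traces: there is no sequence of positive integers (n_k) and group homomorphisms π_k : G_p → U(n_k) such that Tr_{n_k}(π_k(g)) → τ(g) for every g ∈ G_p. -/

import Mathlib

open Filter Topology

/-- `ℤ[1/p]` as an additive subgroup of `ℚ`: rationals of the form `k / p^n`. -/
def Zp (p : ℕ) : AddSubgroup ℚ where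
  carrier := {q : ℚ | ∃ (k : ℤ) (n : ℕ), q * (p : ℚ) ^ n = (k : ℚ)}
  zero_mem' := ⟨0, 0, by norm_num⟩
  add_mem' := by
    rintro a b ⟨k1, n1, h1⟩ ⟨k2, n2, h2⟩
    refine ⟨k1 * (p : ℤ) ^ n2 + k2 * (p : ℤ) ^ n1, n1 + n2, ?_⟩
    push_cast
    calc (a + b) * (p : ℚ) ^ (n1 + n2)
        = a * (p : ℚ) ^ n1 * (p : ℚ) ^ n2 + b * (p : ℚ) ^ n2 * (p : ℚ) ^ n1 := by
          rw [pow_add]; ring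
      _ = (k1 : ℚ) * (p : ℚ) ^ n2 + (k2 : ℚ) * (p : ℚ) ^ n1 := by rw [h1, h2]
  neg_mem' := by
    rintro a ⟨k, n, h⟩
    refine ⟨-k, n, ?_⟩
    push_cast
    rw [neg_mul, h]

lemma one_mem_Zp (p : ℕ) : (1 : ℚ) ∈ Zp p := ⟨1, 0, by norm_num⟩

/-- The group `G_p = ℤ[1/p]² ⋊ ℤ`, realized as triples `(a, b, c)` with the
multiplication `(a₁,b₁,c₁)(a₂,b₂,c₂) = (a₁+a₂+c₁b₂, b₁+b₂, c₁+c₂)`. -/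
abbrev Gp (p : ℕ) : Type := Zp p × Zp p × ℤ

instance Gp.instGroup (p : ℕ) : Group (Gp p) where
  mul x y := ⟨x.1 + y.1 + x.2.2 • y.2.1, x.2.1 + y.2.1, x.2.2 + y.2.2⟩
  one := ⟨0, 0, 0⟩
  inv x := ⟨-x.1 + x.2.2 • x.2.1, -x.2.1, -x.2.2⟩
  mul_assoc x y z := by
    refine Prod.ext ?_ (Prod.ext ?_ ?_)
    · show x.1 + y.1 + x.2.2 • y.2.1 + z.1 + (x.2.2 + y.2.2) • z.2.1 =
        x.1 + (y.1 + z.1 + y.2.2 • z.2.1) + x.2.2 • (y.2.1 + z.2.1)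
      rw [add_smul, smul_add]; abel
    · show x.2.1 + y.2.1 + z.2.1 = x.2.1 + (y.2.1 + z.2.1)
      rw [add_assoc]
    · show x.2.2 + y.2.2 + z.2.2 = x.2.2 + (y.2.2 + z.2.2)
      rw [add_assoc]
  one_mul x := by
    refine Prod.ext ?_ (Prod.ext ?_ ?_)
    · show 0 + x.1 + (0 : ℤ) • x.2.1 = x.1
      simp
    · show 0 + x.2.1 = x.2.1
      simp
    · show 0 + x.2.2 = x.2.2
      simp
  mul_one x := by
    refine Prod.ext ?_ (Prod.ext ?_ ?_)
    · show x.1 + 0 + x.2.2 • (0 : Zp p) = x.1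
      simp
    · show x.2.1 + 0 = x.2.1
      simp
    · show x.2.2 + 0 = x.2.2
      simp
  inv_mul_cancel x := by
    refine Prod.ext ?_ (Prod.ext ?_ ?_)
    · show -x.1 + x.2.2 • x.2.1 + x.1 + (-x.2.2) • x.2.1 = 0
      rw [neg_smul]; abel
    · show -x.2.1 + x.2.1 = 0
      simp
    · show -x.2.2 + x.2.2 = 0
      simp

/-- The normalized trace of an `n × n` complex matrix (`trN n 1 = 1`). -/
noncomputable def trN (n : ℕ) (A : Matrix (Fin n) (Fin n) ℂ) : ℂ :=
  A.trace / n

/-- The subgroup `H_p = {(a, b, 0) : a, b ∈ ℤ} ≤ G_p` (generated by `(1,0,0)` and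
`(0,1,0)`), as a set. -/
def HpSet (p : ℕ) : Set (Gp p) :=
  {g | (∃ k : ℤ, (g.1 : ℚ) = (k : ℚ)) ∧ (∃ k : ℤ, (g.2.1 : ℚ) = (k : ℚ)) ∧ g.2.2 = 0}


namespace GpAux

variable {p : ℕ}

lemma mk_mul (a b : Zp p) (c : ℤ) (a' b' : Zp p) (c' : ℤ) :
    ((a, b, c) : Gp p) * (a', b', c') = (a + a' + c • b', b + b', c + c') := rfl

lemma central (a : Zp p) (g : Gp p) : ((a, 0, 0) : Gp p) * g = g * (a, 0, 0) := by
  refine Prod.ext ?_ (Prod.ext ?_ ?_)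
  · show a + g.1 + (0 : ℤ) • g.2.1 = g.1 + a + g.2.2 • (0 : Zp p)
    simp [add_comm]
  · show (0 : Zp p) + g.2.1 = g.2.1 + 0
    simp
  · show (0 : ℤ) + g.2.2 = g.2.2 + 0
    simp

lemma powN (a b : Zp p) (l : ℕ) : ((a, b, 0) : Gp p) ^ l = (l • a, l • b, (0 : ℤ)) := by
  induction l with
  | zero =>
    simp only [pow_zero, zero_smul]
    rfl
  | succ l ih =>
    rw [pow_succ, ih, mk_mul]
    refine Prod.ext ?_ (Prod.ext ?_ ?_)
    · show l • a + a + (0 : ℤ) • b = (l + 1) • a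
      simp [add_smul, add_comm]
    · show l • b + b = (l + 1) • b
      simp [add_smul]
    · show (0 : ℤ) + 0 = 0
      simp


def pinv (p : ℕ) (hp : p.Prime) (m : ℕ) : Zp p :=
  ⟨((p : ℚ) ^ m)⁻¹, 1, m, by
    have hp0 : (p : ℚ) ≠ 0 := Nat.cast_ne_zero.mpr hp.ne_zero
    field_simp
    simp⟩

variable (hp : p.Prime)

def zel (m : ℕ) : Gp p := (pinv p hp m, 0, 0)
def wel (m : ℕ) : Gp p := (0, pinv p hp m, 0)
def tel : Gp p := (0, 0, 1)
def yel : Gp p := (0, ⟨1, one_mem_Zp p⟩, 0)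

lemma coe_pinv (m : ℕ) : ((pinv p hp m : Zp p) : ℚ) = ((p : ℚ) ^ m)⁻¹ := rfl

lemma zel_pow (m : ℕ) : (zel hp (m + 1)) ^ p = zel hp m := by
  have hp0 : (p : ℚ) ≠ 0 := Nat.cast_ne_zero.mpr hp.ne_zero
  rw [zel, powN, zel]
  refine Prod.ext ?_ (Prod.ext ?_ rfl)
  · apply Subtype.ext
    show ((p • pinv p hp (m + 1) : Zp p) : ℚ) = ((p : ℚ) ^ m)⁻¹
    rw [AddSubgroup.coe_nsmul, coe_pinv]
    rw [nsmul_eq_mul]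
    rw [pow_succ]
    field_simp
  · show (p • (0 : Zp p)) = 0
    simp

lemma zel_central (m : ℕ) (g : Gp p) : zel hp m * g = g * zel hp m := central _ g

lemma trel (m : ℕ) : tel * wel hp m = (zel hp m * wel hp m) * tel := by
  rw [tel, wel, zel, mk_mul, mk_mul, mk_mul]
  refine Prod.ext ?_ (Prod.ext ?_ ?_) <;> simp

lemma tel_pow (l : ℕ) : (tel : Gp p) ^ l = (0, 0, (l : ℤ)) := by
  induction l with
  | zero => simp only [pow_zero, Nat.cast_zero]; rfl
  | succ l ih =>
    rw [pow_succ, ih, mk_mul]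
    refine Prod.ext ?_ (Prod.ext ?_ ?_)
    · show (0 : Zp p) + 0 + (l : ℤ) • (0 : Zp p) = 0
      simp
    · show (0 : Zp p) + 0 = 0
      simp
    · show (l : ℤ) + 1 = ((l + 1 : ℕ) : ℤ)
      push_cast; ring

lemma conj_y (l : ℕ) : (tel : Gp p) ^ l * yel = ((zel hp 0) ^ l * yel) * tel ^ l := by
  rw [tel_pow, zel, powN, yel, mk_mul, mk_mul, mk_mul]
  refine Prod.ext ?_ (Prod.ext ?_ ?_)
  · apply Subtype.ext
    show (((0 : Zp p) + 0 + (l : ℤ) • (⟨1, one_mem_Zp p⟩ : Zp p) : Zp p) : ℚ)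
      = ((l • pinv p hp 0 + 0 + (0 : ℤ) • (⟨1, one_mem_Zp p⟩ : Zp p) + 0 + (0 : ℤ) • (0 : Zp p) : Zp p) : ℚ)
    push_cast
    simp [coe_pinv]
  · simp
  · simp

lemma yel_mem : (yel : Gp p) ∈ HpSet p := by
  refine ⟨⟨0, ?_⟩, ⟨1, ?_⟩, rfl⟩
  · simp [yel]
  · simp [yel]

lemma zel_one_not_mem : (zel hp 1 : Gp p) ∉ HpSet p := by
  rintro ⟨⟨k, hk⟩, -, -⟩
  rw [zel] at hk
  simp only [coe_pinv, pow_one] at hk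
  have hp1 : (1 : ℚ) < (p : ℚ) := by exact_mod_cast hp.one_lt
  have h0 : (0 : ℚ) < (p : ℚ)⁻¹ := by positivity
  have h1 : (p : ℚ)⁻¹ < 1 := by
    rw [inv_lt_one_iff₀]
    right; exact hp1
  rw [hk] at h0 h1
  have : (0 : ℤ) < k := by exact_mod_cast h0
  have : (k : ℚ) ≥ 1 := by exact_mod_cast this
  linarith

end GpAux


open Finset in
/-- Fourier-trick eigenvector construction. -/
lemma eig_construct {V : Type*} [AddCommGroup V] [Module ℂ V]
    {p : ℕ} (hp : p.Prime) (B : V →ₗ[ℂ] V) (S : Submodule ℂ V)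
    (hS : ∀ v ∈ S, B v ∈ S) {v : V} (hv : v ∈ S) {c : ℂ} (hc : c ≠ 0)
    (hBp : (B ^ p) v = c ^ p • v) (hnz : (B ^ (p - 1)) v ≠ 0) :
    ∃ (η : ℂ) (u : V), η ^ p = c ^ p ∧ u ≠ 0 ∧ u ∈ S ∧ B u = η • u ∧
      ((∑ l ∈ range p, c ^ (p - 1 - l) • (B ^ l) v) = 0 → η ≠ c) := by
  classical
  have hp0 : (p : ℂ) ≠ 0 := Nat.cast_ne_zero.mpr hp.ne_zero
  obtain ⟨ω, hω⟩ : ∃ ω : ℂ, IsPrimitiveRoot ω p :=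
    ⟨Complex.exp (2 * Real.pi * Complex.I / p), Complex.isPrimitiveRoot_exp p hp.ne_zero⟩
  set u : ℕ → V := fun j => ∑ l ∈ range p, (c * ω ^ j) ^ (p - 1 - l) • (B ^ l) v with hu
  -- each u j lies in S
  have hpow_mem : ∀ l, (B ^ l) v ∈ S := by
    intro l
    induction l with
    | zero => simpa using hv
    | succ l ih => rw [pow_succ', Module.End.mul_apply]; exact hS _ ih
  have humem : ∀ j, u j ∈ S := fun j => Submodule.sum_mem _ fun l _ => Submodule.smul_mem _ _ (hpow_mem l)
  -- sum of the u j
  have hsum : ∑ j ∈ range p, u j = (p : ℂ) • (B ^ (p - 1)) v := by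
    rw [Finset.sum_comm]
    have : ∀ l ∈ range p,
        (∑ j ∈ range p, (c * ω ^ j) ^ (p - 1 - l) • (B ^ l) v)
          = (if l = p - 1 then (p : ℂ) else 0) • (B ^ l) v := by
      intro l hl
      rw [← Finset.sum_smul]
      congr 1
      have : ∀ j, (c * ω ^ j) ^ (p - 1 - l) = c ^ (p - 1 - l) * (ω ^ (p - 1 - l)) ^ j := by
        intro j; rw [mul_pow, ← pow_mul, ← pow_mul, Nat.mul_comm]
      simp only [this, ← Finset.mul_sum]
      by_cases hlp : l = p - 1
      · simp [hlp]
      · have hlt : p - 1 - l < p := lt_of_le_of_lt (Nat.sub_le _ _) (Nat.sub_lt hp.pos one_pos)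
        have hpos : 0 < p - 1 - l := by
          have : l < p - 1 := lt_of_le_of_ne (Nat.le_sub_one_of_lt (mem_range.mp hl)) hlp
          omega
        have hne : ω ^ (p - 1 - l) ≠ 1 := hω.pow_ne_one_of_pos_of_lt hpos.ne' hlt
        have hgeom : ∑ j ∈ range p, (ω ^ (p - 1 - l)) ^ j = 0 := by
          rw [geom_sum_eq hne]
          have : (ω ^ (p - 1 - l)) ^ p = 1 := by
            rw [← pow_mul, Nat.mul_comm, pow_mul, hω.pow_eq_one, one_pow]
          rw [this]; simp
        rw [hgeom, if_neg hlp, mul_zero]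
    rw [Finset.sum_congr rfl this]
    simp only [ite_smul, zero_smul]
    rw [Finset.sum_ite_eq' (range p) (p - 1)]
    simp [Nat.sub_lt hp.pos one_pos]
  -- choose j with u j ≠ 0
  have hex : ∃ j ∈ range p, u j ≠ 0 := by
    by_contra h
    push_neg at h
    have : ∑ j ∈ range p, u j = 0 := Finset.sum_eq_zero h
    rw [hsum] at this
    exact smul_ne_zero hp0 hnz this
  obtain ⟨j, hjp, hj⟩ := hex
  set d : ℂ := c * ω ^ j with hd
  have hdp : d ^ p = c ^ p := by
    rw [hd, mul_pow, ← pow_mul, Nat.mul_comm, pow_mul, hω.pow_eq_one, one_pow, mul_one]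
  -- eigen equation
  have heig : B (u j) = d • u j := by
    have e1 : B (u j) = ∑ l ∈ range p, d ^ (p - (l + 1)) • (B ^ (l + 1)) v := by
      rw [hu]
      simp only [map_sum, map_smul]
      refine Finset.sum_congr rfl fun l _ => ?_
      rw [pow_succ', Module.End.mul_apply]
      congr 2
      omega
    have e2 : ∑ l ∈ range (p + 1), d ^ (p - l) • (B ^ l) v
        = (∑ l ∈ range p, d ^ (p - (l + 1)) • (B ^ (l + 1)) v) + d ^ (p - 0) • (B ^ 0) v :=
      Finset.sum_range_succ' _ p
    have e3 : ∑ l ∈ range (p + 1), d ^ (p - l) • (B ^ l) v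
        = (∑ l ∈ range p, d ^ (p - l) • (B ^ l) v) + d ^ (p - p) • (B ^ p) v :=
      Finset.sum_range_succ _ p
    have e4 : ∑ l ∈ range p, d ^ (p - l) • (B ^ l) v = d • u j := by
      rw [hu, Finset.smul_sum]
      refine Finset.sum_congr rfl fun l hl => ?_
      rw [smul_smul]
      congr 1
      have : p - l = (p - 1 - l) + 1 := by
        have := Finset.mem_range.mp hl; omega
      rw [this, pow_succ']
    have e5 : d ^ (p - p) • (B ^ p) v = d ^ (p - 0) • (B ^ 0) v := by
      simp only [Nat.sub_self, pow_zero, one_smul, Nat.sub_zero, hBp, hdp]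
      simp
    rw [e1]
    have := e2.symm.trans e3
    rw [e5] at this
    have h6 : ∑ l ∈ range p, d ^ (p - (l + 1)) • (B ^ (l + 1)) v
        = ∑ l ∈ range p, d ^ (p - l) • (B ^ l) v := by
      exact add_right_cancel this
    rw [h6, e4]
  refine ⟨d, u j, hdp, hj, humem j, heig, ?_⟩
  intro hzero hdc
  have hu0 : u 0 = 0 := by
    rw [hu]
    simpa using hzero
  have hj0 : j ≠ 0 := by
    intro h; rw [h] at hj; exact hj hu0
  have : ω ^ j = 1 := by
    have := mul_left_cancel₀ hc (hdc.trans (mul_one c).symm)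
    exact this
  exact hω.pow_ne_one_of_pos_of_lt hj0 (Finset.mem_range.mp hjp) this


section
variable {V : Type*} [AddCommGroup V] [Module ℂ V]

lemma pow_inj {f : V →ₗ[ℂ] V} (hf : Function.Injective f) (n : ℕ) :
    Function.Injective (f ^ n) := by
  induction n with
  | zero => simp [Module.End.one_eq_id]; exact fun a b h => h
  | succ n ih =>
    rw [pow_succ]
    intro a b h
    simp only [Module.End.mul_apply] at h
    exact hf (ih (by simpa using h))



/-- Determinant argument on an invariant subspace. -/
lemma det_arg {V : Type*} [AddCommGroup V] [Module ℂ V] [FiniteDimensional ℂ V]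
    (S : Submodule ℂ V) (T W : V →ₗ[ℂ] V)
    (hT : Function.Injective T) (hW : Function.Injective W)
    (hTS : ∀ v ∈ S, T v ∈ S) (hWS : ∀ v ∈ S, W v ∈ S)
    (ζ : ℂ) (hrel : ∀ v ∈ S, T (W v) = ζ • W (T v)) :
    ζ ^ (Module.finrank ℂ S) = 1 := by
  set Ts := T.restrict hTS with hTs
  set Ws := W.restrict hWS with hWs
  have hcomp : Ts ∘ₗ Ws = ζ • (Ws ∘ₗ Ts) := by
    ext ⟨v, hv⟩
    simp only [LinearMap.coe_comp, Function.comp_apply, LinearMap.smul_apply]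
    simp only [LinearMap.restrict_apply, Submodule.coe_smul]
    exact hrel v hv
  have hdet : Ts.det * Ws.det = ζ ^ (Module.finrank ℂ S) * (Ws.det * Ts.det) := by
    calc Ts.det * Ws.det = (Ts ∘ₗ Ws).det := (LinearMap.det_comp _ _).symm
    _ = (ζ • (Ws ∘ₗ Ts)).det := by rw [hcomp]
    _ = ζ ^ (Module.finrank ℂ S) * (Ws ∘ₗ Ts).det := LinearMap.det_smul _ _
    _ = ζ ^ (Module.finrank ℂ S) * (Ws.det * Ts.det) := by rw [LinearMap.det_comp]
  have hTsi : Function.Injective Ts := by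
    intro a b hab
    apply Subtype.ext
    apply hT
    have := congrArg (Subtype.val) hab
    simpa [hTs, LinearMap.restrict_apply] using this
  have hWsi : Function.Injective Ws := by
    intro a b hab
    apply Subtype.ext
    apply hW
    have := congrArg (Subtype.val) hab
    simpa [hWs, LinearMap.restrict_apply] using this
  have hdTs : Ts.det ≠ 0 := by
    have hb : Function.Bijective Ts := ⟨hTsi, (LinearMap.injective_iff_surjective).mp hTsi⟩
    have := LinearEquiv.isUnit_det' (LinearEquiv.ofBijective Ts hb)
    simpa [show ((LinearEquiv.ofBijective Ts hb : S →ₗ[ℂ] S)) = Ts from LinearMap.ext fun _ => rfl] using this.ne_zero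
  have hdWs : Ws.det ≠ 0 := by
    have hb : Function.Bijective Ws := ⟨hWsi, (LinearMap.injective_iff_surjective).mp hWsi⟩
    have := LinearEquiv.isUnit_det' (LinearEquiv.ofBijective Ws hb)
    simpa [show ((LinearEquiv.ofBijective Ws hb : S →ₗ[ℂ] S)) = Ws from LinearMap.ext fun _ => rfl] using this.ne_zero
  rw [mul_comm (Ws.det) (Ts.det)] at hdet
  have h1 : ζ ^ (Module.finrank ℂ S) * (Ts.det * Ws.det) = 1 * (Ts.det * Ws.det) := by
    rw [one_mul]; exact hdet.symm
  exact mul_right_cancel₀ (mul_ne_zero hdTs hdWs) h1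

/-- The key algebraic rigidity lemma. -/
lemma ker_incl [FiniteDimensional ℂ V] {p : ℕ} (hp : p.Prime)
    (Z W : ℕ → (V →ₗ[ℂ] V)) (T : V →ₗ[ℂ] V)
    (hZinj : ∀ m, Function.Injective (Z m))
    (hWinj : ∀ m, Function.Injective (W m))
    (hTinj : Function.Injective T)
    (hZpow : ∀ m, (Z (m + 1)) ^ p = Z m)
    (hZZ : ∀ m j, (Z m) ∘ₗ (Z j) = (Z j) ∘ₗ (Z m))
    (hTZ : ∀ m, T ∘ₗ Z m = Z m ∘ₗ T)
    (hWZ : ∀ m j, W m ∘ₗ Z j = Z j ∘ₗ W m)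
    (hrel : ∀ m, T ∘ₗ W m = Z m ∘ₗ (W m ∘ₗ T)) :
    ∀ v : V, Z 0 v = v → Z 1 v = v := by
  intro v0 hv0
  by_contra hne
  set K : Submodule ℂ V := LinearMap.ker (Z 0 - LinearMap.id) with hK
  have hKmem : ∀ v, v ∈ K ↔ Z 0 v = v := by
    intro v
    simp [hK, LinearMap.mem_ker, sub_eq_zero, LinearMap.sub_apply]
  have hKinvZ : ∀ m, ∀ v ∈ K, Z m v ∈ K := by
    intro m v hv
    rw [hKmem] at hv ⊢
    have := LinearMap.congr_fun (hZZ 0 m) v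
    simp only [LinearMap.comp_apply] at this
    rw [this, hv]
  have hKinvT : ∀ v ∈ K, T v ∈ K := by
    intro v hv
    rw [hKmem] at hv ⊢
    have := LinearMap.congr_fun (hTZ 0) v
    simp only [LinearMap.comp_apply] at this
    rw [← this, hv]
  have hKinvW : ∀ m, ∀ v ∈ K, W m v ∈ K := by
    intro m v hv
    rw [hKmem] at hv ⊢
    have := LinearMap.congr_fun (hWZ m 0) v
    simp only [LinearMap.comp_apply] at this
    rw [← this, hv]
  -- the eigenspace tower predicate
  set P : ℕ → Prop := fun s => ∃ (ζ : ℂ) (u : V),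
    ζ ^ p ^ (s + 1) = 1 ∧ ζ ^ p ^ s ≠ 1 ∧ u ≠ 0 ∧ u ∈ K ∧ Z (s + 1) u = ζ • u with hP
  -- base case
  have base : P 0 := by
    set B := Z 1 with hB
    set v' := B v0 - v0 with hv'
    have hv'0 : v' ≠ 0 := sub_ne_zero.mpr hne
    have hv0K : v0 ∈ K := (hKmem v0).mpr hv0
    have hv'K : v' ∈ K := K.sub_mem (hKinvZ 1 v0 hv0K) hv0K
    have hBp : (B ^ p) v' = (1 : ℂ) ^ p • v' := by
      rw [hZpow 0, one_pow, one_smul]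
      exact (hKmem v').mp hv'K
    have hnz : (B ^ (p - 1)) v' ≠ 0 := fun h => hv'0 (pow_inj (hZinj 1) (p - 1) (by simpa using h))
    have htel : (∑ l ∈ Finset.range p, (1 : ℂ) ^ (p - 1 - l) • (B ^ l) v') = 0 := by
      have : ∀ l, (1 : ℂ) ^ (p - 1 - l) • (B ^ l) v' = (B ^ (l + 1)) v0 - (B ^ l) v0 := by
        intro l
        rw [one_pow, one_smul, hv', map_sub, pow_succ, Module.End.mul_apply]
      rw [Finset.sum_congr rfl fun l _ => this l, Finset.sum_range_sub (fun l => (B ^ l) v0)]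
      rw [hZpow 0]
      simp [hv0]
    obtain ⟨η, u, hηp, hu0, huK, heig, hητ⟩ :=
      eig_construct hp B K (hKinvZ 1) hv'K one_ne_zero hBp hnz
    refine ⟨η, u, ?_, ?_, hu0, huK, heig⟩
    · rw [pow_one]; simpa using hηp
    · simpa using hητ htel
  -- inductive step
  have step : ∀ s, P s → P (s + 1) := by
    intro s hs
    obtain ⟨ζ, u, h1, h2, hu0, huK, heig⟩ := hs
    have hζ0 : ζ ≠ 0 := by
      intro h
      rw [h, zero_pow (pow_ne_zero _ hp.ne_zero)] at h1
      exact zero_ne_one h1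
    obtain ⟨c, hcp⟩ := IsAlgClosed.exists_pow_nat_eq ζ hp.pos
    have hc0 : c ≠ 0 := by
      intro h; rw [h, zero_pow hp.ne_zero] at hcp; exact hζ0 hcp.symm
    set S : Submodule ℂ V := K ⊓ LinearMap.ker (Z (s + 1) - ζ • LinearMap.id) with hS
    have hSmem : ∀ v, v ∈ S ↔ v ∈ K ∧ Z (s + 1) v = ζ • v := by
      intro v
      simp [hS, LinearMap.mem_ker, sub_eq_zero, LinearMap.sub_apply]
    have hSinv : ∀ v ∈ S, Z (s + 2) v ∈ S := by
      intro v hv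
      rw [hSmem] at hv ⊢
      refine ⟨hKinvZ _ _ hv.1, ?_⟩
      have := LinearMap.congr_fun (hZZ (s + 1) (s + 2)) v
      simp only [LinearMap.comp_apply] at this
      rw [this, hv.2, map_smul]
    have huS : u ∈ S := (hSmem u).mpr ⟨huK, heig⟩
    have hBp : ((Z (s + 2)) ^ p) u = c ^ p • u := by rw [hZpow (s + 1), hcp, heig]
    have hnz : ((Z (s + 2)) ^ (p - 1)) u ≠ 0 :=
      fun h => hu0 (pow_inj (hZinj (s + 2)) (p - 1) (by simpa using h))
    obtain ⟨η, u', hηp, hu'0, hu'S, heig', -⟩ :=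
      eig_construct hp (Z (s + 2)) S hSinv huS hc0 hBp hnz
    have hηζ : η ^ p = ζ := hηp.trans hcp
    refine ⟨η, u', ?_, ?_, hu'0, ((hSmem u').mp hu'S).1, heig'⟩
    · rw [pow_succ' p (s + 1), pow_mul, hηζ, h1]
    · rw [pow_succ' p s, pow_mul, hηζ]; exact h2
  have all : ∀ s, P s := by
    intro s; induction s with
    | zero => exact base
    | succ s ih => exact step s ih
  -- dimension bound from the determinant argument
  have bound : ∀ s, p ^ (s + 1) ≤ Module.finrank ℂ V := by
    intro s
    obtain ⟨ζ, u, h1, h2, hu0, huK, heig⟩ := all s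
    set S : Submodule ℂ V := K ⊓ LinearMap.ker (Z (s + 1) - ζ • LinearMap.id) with hS
    have hSmem : ∀ v, v ∈ S ↔ v ∈ K ∧ Z (s + 1) v = ζ • v := by
      intro v
      simp [hS, LinearMap.mem_ker, sub_eq_zero, LinearMap.sub_apply]
    have hSinvT : ∀ v ∈ S, T v ∈ S := by
      intro v hv
      rw [hSmem] at hv ⊢
      refine ⟨hKinvT _ hv.1, ?_⟩
      have := LinearMap.congr_fun (hTZ (s + 1)) v
      simp only [LinearMap.comp_apply] at this
      rw [← this, hv.2, map_smul]
    have hSinvW : ∀ v ∈ S, W (s + 1) v ∈ S := by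
      intro v hv
      rw [hSmem] at hv ⊢
      refine ⟨hKinvW _ _ hv.1, ?_⟩
      have := LinearMap.congr_fun (hWZ (s + 1) (s + 1)) v
      simp only [LinearMap.comp_apply] at this
      rw [← this, hv.2, map_smul]
    have hdet : ζ ^ (Module.finrank ℂ S) = 1 := by
      apply det_arg S T (W (s + 1)) hTinj (hWinj (s + 1)) hSinvT hSinvW
      intro v hv
      have e := LinearMap.congr_fun (hrel (s + 1)) v
      simp only [LinearMap.comp_apply] at e
      rw [e]
      have hWTv : W (s + 1) (T v) ∈ S := hSinvW _ (hSinvT _ hv)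
      exact ((hSmem _).mp hWTv).2
    have hupos : 0 < Module.finrank ℂ S := by
      have : Nontrivial S := ⟨⟨⟨u, (hSmem u).mpr ⟨huK, heig⟩⟩, 0, by simp [hu0]⟩⟩
      exact Module.finrank_pos
    -- order of ζ is exactly p ^ (s+1)
    have hord : orderOf ζ = p ^ (s + 1) := by
      have hdvd : orderOf ζ ∣ p ^ (s + 1) := orderOf_dvd_of_pow_eq_one h1
      obtain ⟨i, hi, hio⟩ := (Nat.dvd_prime_pow hp).mp hdvd
      by_cases his : i = s + 1
      · rw [hio, his]
      · exfalso
        have : i ≤ s := by omega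
        have : orderOf ζ ∣ p ^ s := hio ▸ pow_dvd_pow p this
        exact h2 (orderOf_dvd_iff_pow_eq_one.mp this)
    have : p ^ (s + 1) ∣ Module.finrank ℂ S := hord ▸ orderOf_dvd_of_pow_eq_one hdet
    calc p ^ (s + 1) ≤ Module.finrank ℂ S := Nat.le_of_dvd hupos this
    _ ≤ Module.finrank ℂ V := Submodule.finrank_le S
  -- contradiction
  have h1 := bound (Module.finrank ℂ V)
  have h2 : Module.finrank ℂ V < p ^ (Module.finrank ℂ V) := Nat.lt_pow_self hp.one_lt
  have h3 : p ^ (Module.finrank ℂ V) ≤ p ^ (Module.finrank ℂ V + 1) :=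
    Nat.pow_le_pow_right hp.pos (by omega)
  omega

end


local notation "⟪" x ", " y "⟫" => @inner ℂ _ _ x y

section
variable {V : Type*} [NormedAddCommGroup V] [InnerProductSpace ℂ V] [FiniteDimensional ℂ V]

lemma trace_onb {ι : Type*} [Fintype ι] [DecidableEq ι] (b : OrthonormalBasis ι ℂ V)
    (f : V →ₗ[ℂ] V) :
    LinearMap.trace ℂ V f = ∑ i, ⟪b i, f (b i)⟫ := by
  rw [LinearMap.trace_eq_matrix_trace ℂ b.toBasis f, Matrix.trace]
  refine Finset.sum_congr rfl fun i _ => ?_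
  rw [Matrix.diag_apply, LinearMap.toMatrix_apply, OrthonormalBasis.coe_toBasis,
    OrthonormalBasis.coe_toBasis_repr_apply, OrthonormalBasis.repr_apply_apply]

lemma trace_decomp (K L : Submodule ℂ V) (hcompl : IsCompl K L) (f : V →ₗ[ℂ] V)
    (hK : ∀ v ∈ K, f v ∈ K) (hL : ∀ v ∈ L, f v ∈ L) :
    LinearMap.trace ℂ V f
      = LinearMap.trace ℂ K (f.restrict hK) + LinearMap.trace ℂ L (f.restrict hL) := by
  set e : (K × L) ≃ₗ[ℂ] V := Submodule.prodEquivOfIsCompl K L hcompl with he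
  have key : (e.symm.conj f) = (f.restrict hK).prodMap (f.restrict hL) := by
    apply LinearMap.ext
    rintro ⟨a, b⟩
    apply e.injective
    have h1 : e (a, b) = (a : V) + (b : V) := Submodule.coe_prodEquivOfIsCompl' _ _ _ _
    have h2 : f ((a : V) + (b : V)) = ((f.restrict hK a : K) : V) + ((f.restrict hL b : L) : V) := by
      rw [map_add]
      congr 1 <;> rw [LinearMap.restrict_coe_apply]
    have h3 : e ((f.restrict hK).prodMap (f.restrict hL) (a, b))
        = ((f.restrict hK a : K) : V) + ((f.restrict hL b : L) : V) :=
      Submodule.coe_prodEquivOfIsCompl' _ _ _ _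
    have h4 : e ((e.symm.conj f) (a, b)) = f (e (a, b)) := by
      rw [LinearEquiv.conj_apply]
      simp only [LinearMap.comp_apply, LinearEquiv.coe_coe, LinearEquiv.symm_symm,
        LinearEquiv.apply_symm_apply]
    rw [h4, h3, h1, h2]
  calc LinearMap.trace ℂ V f = LinearMap.trace ℂ (K × L) (e.symm.conj f) :=
        (LinearMap.trace_conj' f e.symm).symm
  _ = _ := by rw [key, LinearMap.trace_prodMap']


lemma endgame (X Y Z X' Y' Z' : V →ₗ[ℂ] V)
    (hXX' : X ∘ₗ X' = LinearMap.id) (hYY' : Y ∘ₗ Y' = LinearMap.id)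
    (hZZ' : Z ∘ₗ Z' = LinearMap.id)
    (hX'X : X' ∘ₗ X = LinearMap.id) (hY'Y : Y' ∘ₗ Y = LinearMap.id)
    (hZ'Z : Z' ∘ₗ Z = LinearMap.id)
    (hXi : ∀ v w : V, ⟪X v, X w⟫ = ⟪v, w⟫)
    (hYi : ∀ v w : V, ⟪Y v, Y w⟫ = ⟪v, w⟫)
    (hZi : ∀ v w : V, ⟪Z v, Z w⟫ = ⟪v, w⟫)
    (hXY : X ∘ₗ Y = Y ∘ₗ X) (hXZ : X ∘ₗ Z = Z ∘ₗ X)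
    (htr : ∀ l : ℕ, LinearMap.trace ℂ V ((X ^ l) ∘ₗ Y) = LinearMap.trace ℂ V Y)
    (hker : ∀ v, X v = v → Z v = v) :
    2 * ‖LinearMap.trace ℂ V Y‖ - (Module.finrank ℂ V : ℝ) ≤ (LinearMap.trace ℂ V Z).re := by
  classical
  set K : Submodule ℂ V := LinearMap.ker (X - LinearMap.id) with hKdef
  have hKmem : ∀ v, v ∈ K ↔ X v = v := by
    intro v; simp [hKdef, LinearMap.mem_ker, sub_eq_zero, LinearMap.sub_apply]
  set L : Submodule ℂ V := Kᗮ with hLdef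
  have hcompl : IsCompl K L := K.isCompl_orthogonal_of_hasOrthogonalProjection
  -- generic invariance helper
  have inv_helper : ∀ (U U' : V →ₗ[ℂ] V), (U ∘ₗ U' = LinearMap.id) → (U' ∘ₗ U = LinearMap.id) →
      (X ∘ₗ U = U ∘ₗ X) → (∀ v w : V, ⟪U v, U w⟫ = ⟪v, w⟫) →
      (∀ v ∈ K, U v ∈ K) ∧ (∀ v ∈ L, U v ∈ L) := by
    intro U U' hUU' hU'U hcomm hUi
    have hUU'v : ∀ v, U (U' v) = v := fun v => LinearMap.congr_fun hUU' v
    have hU'Uv : ∀ v, U' (U v) = v := fun v => LinearMap.congr_fun hU'U v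
    have hcommv : ∀ v, X (U v) = U (X v) := fun v => LinearMap.congr_fun hcomm v
    have hKinv : ∀ v ∈ K, U v ∈ K := by
      intro v hv
      rw [hKmem] at hv ⊢
      rw [hcommv, hv]
    have hcommv' : ∀ v, X (U' v) = U' (X v) := by
      intro v
      calc X (U' v) = U' (U (X (U' v))) := (hU'Uv _).symm
      _ = U' (X (U (U' v))) := by rw [hcommv]
      _ = U' (X v) := by rw [hUU'v]
    have hK'inv : ∀ v ∈ K, U' v ∈ K := by
      intro v hv
      rw [hKmem] at hv ⊢
      rw [hcommv', hv]
    refine ⟨hKinv, ?_⟩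
    intro w hw
    rw [hLdef, Submodule.mem_orthogonal] at hw ⊢
    intro k hk
    calc ⟪k, U w⟫ = ⟪U (U' k), U w⟫ := by rw [hUU'v]
    _ = ⟪U' k, w⟫ := hUi _ _
    _ = 0 := hw _ (hK'inv k hk)
  obtain ⟨hXK, hXL⟩ := inv_helper X X' hXX' hX'X rfl hXi
  obtain ⟨hYK, hYL⟩ := inv_helper Y Y' hYY' hY'Y hXY hYi
  obtain ⟨hZK, hZL⟩ := inv_helper Z Z' hZZ' hZ'Z hXZ hZi
  -- X^l fixes K pointwise
  have hXfix : ∀ (l : ℕ), ∀ v ∈ K, (X ^ l) v = v := by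
    intro l
    induction l with
    | zero => intro v _; simp
    | succ l ih =>
      intro v hv
      rw [pow_succ', Module.End.mul_apply, ih v hv]
      exact (hKmem v).mp hv
  -- invariance of K, L under X^l ∘ Y
  have hXYK : ∀ l : ℕ, ∀ v ∈ K, ((X ^ l) ∘ₗ Y) v ∈ K := by
    intro l v hv
    rw [LinearMap.comp_apply, hXfix l _ (hYK v hv)]
    exact hYK v hv
  have hXLpow : ∀ l : ℕ, ∀ v ∈ L, (X ^ l) v ∈ L := by
    intro l
    induction l with
    | zero => intro v hv; simpa using hv
    | succ l ih =>
      intro v hv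
      rw [pow_succ, Module.End.mul_apply]
      exact ih _ (hXL v hv)
  have hXYL : ∀ l : ℕ, ∀ v ∈ L, ((X ^ l) ∘ₗ Y) v ∈ L := by
    intro l v hv
    rw [LinearMap.comp_apply]
    exact hXLpow l _ (hYL v hv)
  -- restriction to K of X^l ∘ Y equals restriction of Y
  have hres : ∀ l : ℕ, (((X ^ l) ∘ₗ Y).restrict (hXYK l)) = Y.restrict hYK := by
    intro l
    apply LinearMap.ext
    intro v
    apply Subtype.ext
    rw [LinearMap.restrict_coe_apply, LinearMap.restrict_coe_apply, LinearMap.comp_apply,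
      hXfix l _ (hYK _ v.2)]
  -- restriction to L of X^l ∘ Y
  set B : L →ₗ[ℂ] L := X.restrict hXL with hBdef
  set Y₂ : L →ₗ[ℂ] L := Y.restrict hYL with hY₂def
  have hres2 : ∀ l : ℕ, (((X ^ l) ∘ₗ Y).restrict (hXYL l)) = (B ^ l) ∘ₗ Y₂ := by
    intro l
    apply LinearMap.ext
    intro v
    apply Subtype.ext
    have e1 : (((((X ^ l) ∘ₗ Y).restrict (hXYL l)) v : L) : V) = (X ^ l) (Y (v : V)) := by
      rw [LinearMap.restrict_coe_apply, LinearMap.comp_apply]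
    have e2 : ((((B ^ l) ∘ₗ Y₂) v : L) : V) = (X ^ l) (Y (v : V)) := by
      rw [LinearMap.comp_apply, hBdef, Module.End.pow_restrict l hXL,
        LinearMap.restrict_coe_apply, hY₂def, LinearMap.restrict_coe_apply]
    rw [e1, e2]
  -- constancy of trace (B^l ∘ Y₂)
  have hconst : ∀ l : ℕ, LinearMap.trace ℂ L ((B ^ l) ∘ₗ Y₂) = LinearMap.trace ℂ L Y₂ := by
    intro l
    have d1 := trace_decomp K L hcompl ((X ^ l) ∘ₗ Y) (hXYK l) (hXYL l)
    have d0 := trace_decomp K L hcompl ((X ^ 0) ∘ₗ Y) (hXYK 0) (hXYL 0)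
    rw [htr l, hres l, hres2 l] at d1
    rw [htr 0, hres 0, hres2 0] at d0
    have e0 : (B ^ 0) ∘ₗ Y₂ = Y₂ := by rw [pow_zero, Module.End.one_eq_id, LinearMap.id_comp]
    rw [e0] at d0
    have := d1.symm.trans d0
    exact add_left_cancel this
  -- the trace of Y₂ vanishes
  have hY₂trace : LinearMap.trace ℂ L Y₂ = 0 := by
    by_cases hnt : Nontrivial L
    · -- minpoly argument
      set q := minpoly ℂ B with hq
      have haev : Polynomial.aeval B q = 0 := minpoly.aeval ℂ B
      have heval : q.eval 1 * LinearMap.trace ℂ L Y₂ = 0 := by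
        have expand : Polynomial.aeval B q
            = ∑ i ∈ Finset.range (q.natDegree + 1), q.coeff i • B ^ i :=
          Polynomial.aeval_eq_sum_range (p := q) B
        have : (0 : V →ₗ[ℂ] V) = 0 := rfl
        have h0 : LinearMap.trace ℂ L ((Polynomial.aeval B q) * Y₂) = 0 := by
          rw [haev, zero_mul, map_zero]
        rw [expand, Finset.sum_mul] at h0
        have h1 : ∀ i ∈ Finset.range (q.natDegree + 1),
            LinearMap.trace ℂ L ((q.coeff i • B ^ i) * Y₂)
              = q.coeff i * LinearMap.trace ℂ L Y₂ := by
          intro i _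
          rw [smul_mul_assoc, map_smul, smul_eq_mul]
          congr 1
          rw [Module.End.mul_eq_comp]
          exact hconst i
        rw [map_sum, Finset.sum_congr rfl h1, ← Finset.sum_mul] at h0
        have h2 : q.eval 1 = ∑ i ∈ Finset.range (q.natDegree + 1), q.coeff i := by
          rw [Polynomial.eval_eq_sum_range]
          simp
        rw [h2]
        exact h0
      have hq1 : q.eval 1 ≠ 0 := by
        intro hroot
        have : Module.End.HasEigenvalue B 1 :=
          Module.End.hasEigenvalue_of_isRoot hroot
        obtain ⟨u, hu⟩ := this.exists_hasEigenvector
        have huB : B u = u := by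
          have := hu.apply_eq_smul
          simpa using this
        have huK : (u : V) ∈ K := by
          rw [hKmem]
          have : ((B u : L) : V) = X (u : V) := LinearMap.restrict_coe_apply _ _ _
          rw [huB] at this
          exact this.symm
        have huL : (u : V) ∈ L := u.2
        have : (u : V) = 0 := by
          have hdisj : Disjoint K L := hcompl.disjoint
          exact Submodule.disjoint_def.mp hdisj _ huK huL
        exact hu.right (Subtype.ext this)
      exact (mul_eq_zero.mp heval).resolve_left hq1
    · rw [not_nontrivial_iff_subsingleton] at hnt
      have : Y₂ = 0 := Subsingleton.elim _ _
      rw [this, map_zero]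
  -- trace Y = trace (Y|K)
  have htrY : LinearMap.trace ℂ V Y = LinearMap.trace ℂ K (Y.restrict hYK) := by
    rw [trace_decomp K L hcompl Y hYK hYL, show Y.restrict hYL = Y₂ from rfl, hY₂trace, add_zero]
  -- norms preserved
  have hnorm : ∀ (U : V →ₗ[ℂ] V), (∀ v w : V, ⟪U v, U w⟫ = ⟪v, w⟫) → ∀ v, ‖U v‖ = ‖v‖ := by
    intro U hUi v
    have h1 := hUi v v
    rw [inner_self_eq_norm_sq_to_K, inner_self_eq_norm_sq_to_K] at h1
    have h2 : ‖U v‖ ^ 2 = ‖v‖ ^ 2 := by exact_mod_cast h1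
    nlinarith [norm_nonneg (U v), norm_nonneg v]
  -- dimension bookkeeping
  set dK := Module.finrank ℂ K with hdK
  set dL := Module.finrank ℂ L with hdL
  have hdim : dK + dL = Module.finrank ℂ V := K.finrank_add_finrank_orthogonal
  -- bound on |trace Y|
  have hYbound : ‖LinearMap.trace ℂ V Y‖ ≤ (dK : ℝ) := by
    rw [htrY]
    set bK := stdOrthonormalBasis ℂ K with hbK
    rw [trace_onb bK (Y.restrict hYK)]
    calc ‖∑ i, ⟪bK i, (Y.restrict hYK) (bK i)⟫‖
        ≤ ∑ i : Fin dK, ‖(⟪bK i, (Y.restrict hYK) (bK i)⟫ : ℂ)‖ := norm_sum_le _ _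
    _ ≤ ∑ _i : Fin dK, (1 : ℝ) := by
        apply Finset.sum_le_sum
        intro i _
        calc ‖(⟪bK i, (Y.restrict hYK) (bK i)⟫ : ℂ)‖
            ≤ ‖bK i‖ * ‖(Y.restrict hYK) (bK i)‖ := norm_inner_le_norm _ _
        _ ≤ 1 * 1 := by
            apply mul_le_mul
            · exact le_of_eq (bK.orthonormal.1 i)
            · have h1 : ‖(Y.restrict hYK) (bK i)‖ = ‖Y ((bK i : K) : V)‖ := by
                rw [← Submodule.norm_coe (Y.restrict hYK (bK i)), LinearMap.restrict_coe_apply]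
              rw [h1, hnorm Y hYi]
              have : ‖((bK i : K) : V)‖ = ‖bK i‖ := Submodule.norm_coe _
              rw [this, bK.orthonormal.1 i]
            · exact norm_nonneg _
            · norm_num
        _ = 1 := by norm_num
    _ = (dK : ℝ) := by simp
  -- trace of Z
  have hZid : Z.restrict hZK = LinearMap.id := by
    apply LinearMap.ext
    intro v
    apply Subtype.ext
    rw [LinearMap.restrict_coe_apply]
    exact hker _ ((hKmem _).mp v.2)
  have hZdec : LinearMap.trace ℂ V Z = (dK : ℂ) + LinearMap.trace ℂ L (Z.restrict hZL) := by
    rw [trace_decomp K L hcompl Z hZK hZL, hZid, LinearMap.trace_id]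
  have hZbound : -(dL : ℝ) ≤ (LinearMap.trace ℂ L (Z.restrict hZL)).re := by
    set bL := stdOrthonormalBasis ℂ L with hbL
    rw [trace_onb bL (Z.restrict hZL)]
    rw [Complex.re_sum]
    calc -(dL : ℝ) = ∑ _i : Fin dL, (-1 : ℝ) := by simp
    _ ≤ ∑ i : Fin dL, (⟪bL i, (Z.restrict hZL) (bL i)⟫ : ℂ).re := by
        apply Finset.sum_le_sum
        intro i _
        have habs : ‖(⟪bL i, (Z.restrict hZL) (bL i)⟫ : ℂ)‖ ≤ 1 := by
          calc ‖(⟪bL i, (Z.restrict hZL) (bL i)⟫ : ℂ)‖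
              ≤ ‖bL i‖ * ‖(Z.restrict hZL) (bL i)‖ := norm_inner_le_norm _ _
          _ = 1 * 1 := by
              rw [bL.orthonormal.1 i]
              have h1 : ‖(Z.restrict hZL) (bL i)‖ = ‖Z ((bL i : L) : V)‖ := by
                rw [← Submodule.norm_coe (Z.restrict hZL (bL i)), LinearMap.restrict_coe_apply]
              rw [h1, hnorm Z hZi, Submodule.norm_coe, bL.orthonormal.1 i]
          _ = 1 := by norm_num
        have h2 := Complex.abs_re_le_norm (⟪bL i, (Z.restrict hZL) (bL i)⟫ : ℂ)
        have := (abs_le.mp (h2.trans habs)).1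
        linarith
  -- conclusion
  have hre : (LinearMap.trace ℂ V Z).re
      = (dK : ℝ) + (LinearMap.trace ℂ L (Z.restrict hZL)).re := by
    rw [hZdec, Complex.add_re, Complex.natCast_re]
  rw [hre]
  have hn : (Module.finrank ℂ V : ℝ) = (dK : ℝ) + (dL : ℝ) := by
    rw [← hdim]; push_cast; ring
  rw [hn]
  linarith

end


section bridge
open Matrix
variable {G : Type*} [Group G] {n : ℕ}

/-- The representation on Euclidean space induced by a unitary representation. -/
noncomputable def rho (φ : G →* Matrix.unitaryGroup (Fin n) ℂ) :
    G →* (EuclideanSpace ℂ (Fin n) →ₗ[ℂ] EuclideanSpace ℂ (Fin n)) where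
  toFun g := Matrix.toEuclideanLin (φ g : Matrix (Fin n) (Fin n) ℂ)
  map_one' := by
    show Matrix.toEuclideanLin ((φ 1 : Matrix.unitaryGroup (Fin n) ℂ) : Matrix (Fin n) (Fin n) ℂ) = 1
    rw [_root_.map_one]
    rw [show ((1 : Matrix.unitaryGroup (Fin n) ℂ) : Matrix (Fin n) (Fin n) ℂ) = 1 from rfl]
    rw [Matrix.toEuclideanLin_eq_toLin, Matrix.toLin_one]
    rfl
  map_mul' g h := by
    show Matrix.toEuclideanLin ((φ (g * h) : Matrix.unitaryGroup (Fin n) ℂ) : Matrix (Fin n) (Fin n) ℂ)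
      = Matrix.toEuclideanLin _ * Matrix.toEuclideanLin _
    rw [_root_.map_mul]
    rw [show ((φ g * φ h : Matrix.unitaryGroup (Fin n) ℂ) : Matrix (Fin n) (Fin n) ℂ)
      = (φ g : Matrix (Fin n) (Fin n) ℂ) * (φ h : Matrix (Fin n) (Fin n) ℂ) from rfl]
    rw [Matrix.toEuclideanLin_eq_toLin, Matrix.toLin_mul _ (PiLp.basisFun 2 ℂ (Fin n)) _]
    rfl

lemma rho_trace (φ : G →* Matrix.unitaryGroup (Fin n) ℂ) (g : G) :
    LinearMap.trace ℂ (EuclideanSpace ℂ (Fin n)) (rho φ g)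
      = Matrix.trace (φ g : Matrix (Fin n) (Fin n) ℂ) := by
  rw [LinearMap.trace_eq_matrix_trace ℂ (PiLp.basisFun 2 ℂ (Fin n))]
  congr 1
  rw [show (rho φ g : EuclideanSpace ℂ (Fin n) →ₗ[ℂ] EuclideanSpace ℂ (Fin n))
    = Matrix.toEuclideanLin (φ g : Matrix (Fin n) (Fin n) ℂ) from rfl]
  rw [Matrix.toEuclideanLin_eq_toLin, LinearMap.toMatrix_toLin]

lemma rho_inner (φ : G →* Matrix.unitaryGroup (Fin n) ℂ) (g : G)
    (x y : EuclideanSpace ℂ (Fin n)) :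
    ⟪rho φ g x, rho φ g y⟫ = ⟪x, y⟫ := by
  set A := (φ g : Matrix (Fin n) (Fin n) ℂ) with hA
  have hAu : A.conjTranspose * A = 1 := by
    have h2 := (φ g).2
    rw [Matrix.mem_unitaryGroup_iff'] at h2
    exact h2
  rw [show rho φ g x = Matrix.toEuclideanLin A x from rfl,
    show rho φ g y = Matrix.toEuclideanLin A y from rfl]
  rw [EuclideanSpace.inner_eq_star_dotProduct, EuclideanSpace.inner_eq_star_dotProduct]
  rw [Matrix.ofLp_toEuclideanLin_apply, Matrix.ofLp_toEuclideanLin_apply]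
  rw [Matrix.star_mulVec, dotProduct_comm]
  rw [← Matrix.dotProduct_mulVec, Matrix.mulVec_mulVec, hAu, Matrix.one_mulVec, dotProduct_comm]

lemma rho_inj (φ : G →* Matrix.unitaryGroup (Fin n) ℂ) (g : G) :
    Function.Injective (rho φ g) := by
  have h : (rho φ g⁻¹) ∘ₗ (rho φ g) = LinearMap.id := by
    rw [← Module.End.mul_eq_comp, ← _root_.map_mul, inv_mul_cancel, _root_.map_one]
    rfl
  intro a b hab
  have := LinearMap.congr_fun h a
  rw [LinearMap.comp_apply, hab] at this
  simpa using (this.symm.trans (LinearMap.congr_fun h b)) -- fix later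
end bridge


/-- the trace `τ = 1_{H_p}` on `G_p` is not a pointwise limit of
finite-dimensional traces. -/
theorem Hp_trace_not_limit_of_fd_traces (p : ℕ) (hp : p.Prime) :
    ¬ ∃ (n : ℕ → ℕ) (π : ∀ k, Gp p →* Matrix.unitaryGroup (Fin (n k)) ℂ),
        (∀ k, 0 < n k) ∧
        ∀ g : Gp p,
          (g ∈ HpSet p → Tendsto (fun k => trN (n k) (π k g)) atTop (nhds 1)) ∧
          (g ∉ HpSet p → Tendsto (fun k => trN (n k) (π k g)) atTop (nhds 0)) := by
  rintro ⟨n, π, hpos, hlim⟩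
  have hy := (hlim GpAux.yel).1 (GpAux.yel_mem)
  have hz := (hlim (GpAux.zel hp 1)).2 (GpAux.zel_one_not_mem hp)
  obtain ⟨k, hk1, hk2⟩ := ((Metric.tendsto_nhds.mp hy (1/4) (by norm_num)).and
    (Metric.tendsto_nhds.mp hz (1/4) (by norm_num))).exists
  set N := n k with hN
  set φ := π k with hφ
  set V := EuclideanSpace ℂ (Fin N) with hV
  -- convenient multiplicative facts
  have hmulcomp : ∀ g h : Gp p, rho φ (g * h) = (rho φ g) ∘ₗ (rho φ h) := by
    intro g h; rw [_root_.map_mul, Module.End.mul_eq_comp]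
  have hinv : ∀ g : Gp p, (rho φ g) ∘ₗ (rho φ g⁻¹) = LinearMap.id := by
    intro g
    rw [← hmulcomp, mul_inv_cancel, _root_.map_one, Module.End.one_eq_id]
  have hinv' : ∀ g : Gp p, (rho φ g⁻¹) ∘ₗ (rho φ g) = LinearMap.id := by
    intro g
    rw [← hmulcomp, inv_mul_cancel, _root_.map_one, Module.End.one_eq_id]
  -- kernel inclusion via the rigidity lemma
  have hker : ∀ v : V, rho φ (GpAux.zel hp 0) v = v → rho φ (GpAux.zel hp 1) v = v := by
    apply ker_incl hp (fun m => rho φ (GpAux.zel hp m)) (fun m => rho φ (GpAux.wel hp m))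
      (rho φ GpAux.tel)
    · exact fun m => rho_inj φ _
    · exact fun m => rho_inj φ _
    · exact rho_inj φ _
    · intro m
      rw [← _root_.map_pow, GpAux.zel_pow hp m]
    · intro m j
      rw [← hmulcomp, ← hmulcomp, GpAux.zel_central hp m (GpAux.zel hp j)]
    · intro m
      rw [← hmulcomp, ← hmulcomp, ← GpAux.zel_central hp m GpAux.tel]
    · intro m j
      rw [← hmulcomp, ← hmulcomp, GpAux.zel_central hp j (GpAux.wel hp m)]
    · intro m
      rw [← hmulcomp, ← hmulcomp, ← hmulcomp, ← mul_assoc, GpAux.trel hp m]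
  -- trace identity
  have htr : ∀ l : ℕ, LinearMap.trace ℂ V (((rho φ (GpAux.zel hp 0)) ^ l) ∘ₗ rho φ GpAux.yel)
      = LinearMap.trace ℂ V (rho φ GpAux.yel) := by
    intro l
    have h1 : ((rho φ (GpAux.zel hp 0)) ^ l) ∘ₗ rho φ GpAux.yel
        = rho φ ((GpAux.zel hp 0) ^ l * GpAux.yel) := by
      rw [hmulcomp, _root_.map_pow]
    have hgrp : (GpAux.zel hp 0) ^ l * GpAux.yel
        = (GpAux.tel ^ l * GpAux.yel) * (GpAux.tel ^ l)⁻¹ := by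
      rw [eq_mul_inv_iff_mul_eq]
      exact (GpAux.conj_y hp l).symm
    rw [h1, hgrp, _root_.map_mul, LinearMap.trace_mul_comm, ← _root_.map_mul]
    congr 1
    group
  -- apply endgame
  have hend := endgame (V := V) (rho φ (GpAux.zel hp 0)) (rho φ GpAux.yel)
    (rho φ (GpAux.zel hp 1))
    (rho φ (GpAux.zel hp 0)⁻¹) (rho φ GpAux.yel⁻¹) (rho φ (GpAux.zel hp 1)⁻¹)
    (hinv _) (hinv _) (hinv _) (hinv' _) (hinv' _) (hinv' _)
    (rho_inner φ _) (rho_inner φ _) (rho_inner φ _)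
    (by rw [← hmulcomp, ← hmulcomp, GpAux.zel_central hp 0 GpAux.yel])
    (by rw [← hmulcomp, ← hmulcomp, GpAux.zel_central hp 0 (GpAux.zel hp 1)])
    htr hker
  -- numerics
  have hNpos : 0 < N := hpos k
  have hfr : (Module.finrank ℂ V : ℝ) = (N : ℝ) := by
    show (Module.finrank ℂ (EuclideanSpace ℂ (Fin N)) : ℝ) = (N : ℝ)
    rw [finrank_euclideanSpace_fin]
  have hN0 : (N:ℂ) ≠ 0 := Nat.cast_ne_zero.mpr (hpos k).ne'
  have htrY : LinearMap.trace ℂ V (rho φ GpAux.yel) = trN N (φ GpAux.yel) * N := by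
    rw [rho_trace]
    simp only [trN]
    field_simp
  have htrZ : LinearMap.trace ℂ V (rho φ (GpAux.zel hp 1))
      = trN N (φ (GpAux.zel hp 1)) * N := by
    rw [rho_trace]
    simp only [trN]
    field_simp
  set a := trN N (φ GpAux.yel) with ha
  set b := trN N (φ (GpAux.zel hp 1)) with hb
  have hknorm : ‖a - 1‖ < 1/4 := by
    have := hk1
    rwa [Complex.dist_eq] at this
  have hbnorm : ‖b‖ < 1/4 := by
    have := hk2
    rwa [Complex.dist_eq, sub_zero] at this
  have hna : (3:ℝ)/4 ≤ ‖a‖ := by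
    have h1 := abs_norm_sub_norm_le a (1 : ℂ)
    have h2 : ‖(1:ℂ)‖ = 1 := by norm_num
    have := (abs_le.mp h1).1
    rw [h2] at this
    linarith
  have hbre : b.re < 1/4 := lt_of_le_of_lt (Complex.re_le_norm b) hbnorm
  rw [htrY, htrZ, hfr] at hend
  have hnormY : ‖a * (N:ℂ)‖ = ‖a‖ * N := by
    rw [norm_mul]
    congr 1
    simp
  have hreZ : (b * (N:ℂ)).re = b.re * N := by
    rw [Complex.mul_re]
    simp
  rw [hnormY, hreZ] at hend
  have hN1 : (1:ℝ) ≤ (N:ℝ) := by exact_mod_cast hNpos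
  nlinarith [hend, hna, hbre, hN1]
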